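/- In the set cover problem with sets S_1, ..., S_n ⊆ E, nonnegative costs c(i), and dual variables y : E → ℝ≥0 satisfying Σ_{e ∈ S_i} y(e) ≤ c(i) for all i (dual feasibility), any collection I of indices such that every i ∈ I is tight (Σ_{e ∈ S_i} y(e) = c(i)) and ∪_{i ∈ I} S_i = E satisfies Σ_{i ∈ I} c(i) ≤ f · Σ_{e ∈ E} y(e) ≤ f · OPT, where f = max_{e ∈ E} |{i : e ∈ S_i}| and OPT is the minimum cost of any set cover. -/
import Mathlib

theorem set_cover_primal_dual_bound {U ι : Type*} [Fintype U] [Fintype ι] [DecidableEq U]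
    (S : ι → Finset U) (c : ι → ℝ) (hc : ∀ i, 0 ≤ c i)
    (y : U → ℝ) (hy : ∀ e, 0 ≤ y e)
    (hfeas : ∀ i, ∑ e ∈ S i, y e ≤ c i)
    (I : Finset ι)
    (htight : ∀ i ∈ I, ∑ e ∈ S i, y e = c i)
    (hcover : ∀ e : U, ∃ i ∈ I, e ∈ S i)
    (f : ℕ)
    (hf : f = Finset.univ.sup fun e : U => (Finset.univ.filter fun i : ι => e ∈ S i).card) :
    ∑ i ∈ I, c i ≤ (f : ℝ) * ∑ e : U, y e ∧
    ∀ C : Finset ι, (∀ e : U, ∃ i ∈ C, e ∈ S i) →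
      (f : ℝ) * ∑ e : U, y e ≤ (f : ℝ) * ∑ i ∈ C, c i := by
  classical
  have key : ∀ J : Finset ι, ∑ i ∈ J, ∑ e ∈ S i, y e
      = ∑ e : U, ((J.filter fun i => e ∈ S i).card : ℝ) * y e := by
    intro J
    have : ∑ i ∈ J, ∑ e ∈ S i, y e
        = ∑ i ∈ J, ∑ e : U, if e ∈ S i then y e else 0 := by
      refine Finset.sum_congr rfl fun i _ => ?_
      rw [Finset.sum_ite_mem, Finset.univ_inter]
    rw [this, Finset.sum_comm]
    refine Finset.sum_congr rfl fun e _ => ?_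
    rw [Finset.sum_ite, Finset.sum_const_zero, add_zero, Finset.sum_const,
      nsmul_eq_mul]
  constructor
  · have h1 : ∑ i ∈ I, c i = ∑ i ∈ I, ∑ e ∈ S i, y e :=
      (Finset.sum_congr rfl fun i hi => (htight i hi).symm)
    rw [h1, key, Finset.mul_sum]
    refine Finset.sum_le_sum fun e _ => ?_
    refine mul_le_mul_of_nonneg_right ?_ (hy e)
    have hle : (I.filter fun i => e ∈ S i).card ≤ f := by
      rw [hf]
      have h3 : (I.filter fun i => e ∈ S i).card ≤ (Finset.univ.filter fun i : ι => e ∈ S i).card :=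
        Finset.card_le_card (Finset.filter_subset_filter _ (Finset.subset_univ I))
      exact h3.trans (Finset.le_sup (f := fun e : U => (Finset.univ.filter fun i : ι => e ∈ S i).card) (Finset.mem_univ e))
    exact_mod_cast hle
  · intro C hC
    refine mul_le_mul_of_nonneg_left ?_ (Nat.cast_nonneg f)
    have h2 : ∑ e : U, y e ≤ ∑ i ∈ C, ∑ e ∈ S i, y e := by
      rw [key]
      refine Finset.sum_le_sum fun e _ => ?_
      have : (1 : ℝ) ≤ ((C.filter fun i => e ∈ S i).card : ℝ) := by
        obtain ⟨i, hi, hei⟩ := hC e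
        have : 0 < (C.filter fun i => e ∈ S i).card :=
          Finset.card_pos.mpr ⟨i, Finset.mem_filter.mpr ⟨hi, hei⟩⟩
        exact_mod_cast this
      nlinarith [hy e]
    exact h2.trans (Finset.sum_le_sum fun i _ => hfeas i)
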